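/- Let d ≥ 3, let d divide n, let n-1 ≤ k ≤ 2n-3, and suppose d divides k. Then with n' = n/d and k' = k/d, the evaluation of c(n,k;q) = (1/[n-1]_q) * qbinom(3n-3, n+k) * qbinom(k-1, n-2) at a primitive d-th root of unity ω equals binom(3n'-1, n'+k') * binom(k'-1, n'-1). -/

import Mathlib

/-- The Gaussian binomial coefficient as a polynomial in `q` over `ℤ`, via the
`q`-Pascal recursion `[n+1, k+1]_q = [n, k]_q + q^(k+1)·[n, k+1]_q`. -/
noncomputable def gauss : ℕ → ℕ → Polynomial ℤ
  | _, 0 => 1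
  | 0, _ + 1 => 0
  | n + 1, k + 1 => gauss n k + Polynomial.X ^ (k + 1) * gauss n (k + 1)

open Polynomial

lemma gauss_zero_right (m : ℕ) : gauss m 0 = 1 := by cases m <;> rfl

lemma gauss_zero_left (k : ℕ) : gauss 0 (k+1) = 0 := rfl

lemma gauss_succ (n k : ℕ) :
    gauss (n+1) (k+1) = gauss n k + Polynomial.X ^ (k+1) * gauss n (k+1) := rfl

lemma gauss_eq_zero : ∀ m k : ℕ, m < k → gauss m k = 0 := by
  intro m
  induction m with
  | zero => intro k hk; cases k with
    | zero => omega
    | succ k => rfl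
  | succ m ih =>
    intro k hk
    cases k with
    | zero => omega
    | succ k =>
      rw [gauss_succ, ih k (by omega), ih (k+1) (by omega)]
      ring

lemma gauss_self : ∀ m : ℕ, gauss m m = 1 := by
  intro m
  induction m with
  | zero => rfl
  | succ m ih => rw [gauss_succ, ih, gauss_eq_zero m (m+1) (by omega)]; ring

lemma gauss_one : ∀ m : ℕ, gauss m 1 = ∑ i ∈ Finset.range m, Polynomial.X ^ i := by
  intro m
  induction m with
  | zero => simp [gauss_zero_left]
  | succ m ih =>
    rw [gauss_succ, gauss_zero_right, ih, geom_sum_succ]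
    ring

lemma gauss_pred : ∀ m : ℕ, gauss (m+1) m = ∑ i ∈ Finset.range (m+1), Polynomial.X ^ i := by
  intro m
  induction m with
  | zero => simp [gauss_zero_right]
  | succ m ih =>
    rw [gauss_succ, ih, gauss_self, Finset.sum_range_succ (fun i => (Polynomial.X:Polynomial ℤ)^i) (m+1)]
    ring

lemma gauss_idA : ∀ m k : ℕ, k ≤ m →
    gauss m (k+1) * (1 - Polynomial.X ^ (k+1)) = gauss m k * (1 - Polynomial.X ^ (m-k)) := by
  intro m
  induction m with
  | zero =>
    intro k hk
    interval_cases k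
    simp [gauss_zero_left, gauss_zero_right]
  | succ m ih =>
    intro k hk
    cases k with
    | zero =>
      rw [gauss_one, gauss_zero_right, Nat.sub_zero, one_mul]
      have := geom_sum_mul (Polynomial.X : Polynomial ℤ) (m+1)
      rw [pow_one]
      linear_combination -this
    | succ k =>
      rcases Nat.lt_or_ge k m with hkm | hkm
      · have h1 : k + 1 ≤ m := hkm
        rw [gauss_succ, gauss_succ m k]
        rw [add_mul, add_mul]
        have e1 := ih (k+1) h1
        have e2 := ih k (le_of_lt hkm)
        have hx : (Polynomial.X:Polynomial ℤ) ^ (k+2) * Polynomial.X ^ (m - (k+1)) = Polynomial.X ^ (m+1) := by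
          rw [← pow_add]; congr 1; omega
        have hx2 : (Polynomial.X:Polynomial ℤ) ^ (k+1) * Polynomial.X ^ (m - k) = Polynomial.X ^ (m+1) := by
          rw [← pow_add]; congr 1; omega
        have hms : m + 1 - (k+1) = m - k := by omega
        rw [hms, mul_assoc ((Polynomial.X:Polynomial ℤ)^(k+2)), e1, ← e2]
        linear_combination gauss m (k+1) * hx2 - gauss m (k+1) * hx
      · -- k ≥ m, so k = m (since k+1 ≤ m+1)
        obtain rfl : m = k := by omega
        rw [gauss_eq_zero (m+1) (m+2) (by omega), gauss_self, Nat.sub_self]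
        simp

noncomputable def gval (ω : ℂ) (m k : ℕ) : ℂ := Polynomial.aeval ω (gauss m k)

lemma gval_zero_right (ω : ℂ) (m : ℕ) : gval ω m 0 = 1 := by
  simp [gval, gauss_zero_right]

lemma gval_zero_left (ω : ℂ) (k : ℕ) : gval ω 0 (k+1) = 0 := by
  simp [gval, gauss_zero_left]

lemma gval_succ (ω : ℂ) (m k : ℕ) :
    gval ω (m+1) (k+1) = gval ω m k + ω^(k+1) * gval ω m (k+1) := by
  simp [gval, gauss_succ]

lemma gval_eq_zero (ω : ℂ) {m k : ℕ} (h : m < k) : gval ω m k = 0 := by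
  simp [gval, gauss_eq_zero m k h]

lemma gval_self (ω : ℂ) (m : ℕ) : gval ω m m = 1 := by
  simp [gval, gauss_self]

lemma gval_one (ω : ℂ) (m : ℕ) : gval ω m 1 = ∑ i ∈ Finset.range m, ω ^ i := by
  simp [gval, gauss_one]

lemma gval_pred (ω : ℂ) (m : ℕ) :
    gval ω (m+1) m = ∑ i ∈ Finset.range (m+1), ω ^ i := by
  simp [gval, gauss_pred]

section
variable {d : ℕ} {ω : ℂ} (hω : IsPrimitiveRoot ω d)
include hω

lemma gval_van (hd : 1 < d) : ∀ t : ℕ, 0 < t → t < d → gval ω d t = 0 := by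
  intro t
  induction t with
  | zero => omega
  | succ s ih =>
    intro _ hsd
    have hA := gauss_idA d s (by omega)
    have hA' : gval ω d (s+1) * (1 - ω^(s+1)) = gval ω d s * (1 - ω^(d-s)) := by
      have := congrArg (Polynomial.aeval ω) hA
      simpa [gval] using this
    have hne : (1 : ℂ) - ω^(s+1) ≠ 0 := by
      have := hω.pow_ne_one_of_pos_of_lt (by omega : s+1 ≠ 0) hsd
      intro h; apply this; linear_combination -h
    rcases Nat.eq_zero_or_pos s with rfl | hs
    · have : gval ω d (0+1) * (1 - ω^(0+1)) = 0 := by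
        rw [hA', gval_zero_right, Nat.sub_zero, hω.pow_eq_one]; ring
      have := mul_eq_zero.mp this
      tauto
    · have : gval ω d (s+1) * (1 - ω^(s+1)) = 0 := by
        rw [hA', ih hs (by omega)]; ring
      have := mul_eq_zero.mp this
      tauto

lemma gval_step (hd : 1 < d) :
    ∀ m k : ℕ, gval ω (m+d) k = gval ω m k + (if d ≤ k then gval ω m (k-d) else 0) := by
  intro m
  induction m with
  | zero =>
    intro k
    rcases Nat.eq_zero_or_pos k with rfl | hk
    · rw [if_neg (by omega : ¬ d ≤ 0), gval_zero_right, gval_zero_right, add_zero]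
    rcases lt_trichotomy k d with h | rfl | h
    · rw [zero_add, gval_van hω hd k hk h, if_neg (by omega)]
      obtain ⟨k', rfl⟩ : ∃ k', k = k'+1 := ⟨k-1, by omega⟩
      rw [gval_zero_left]; ring
    · rw [zero_add, gval_self, if_pos le_rfl, Nat.sub_self, gval_zero_right]
      obtain ⟨k', rfl⟩ : ∃ k', k = k'+1 := ⟨k-1, by omega⟩
      rw [gval_zero_left]; ring
    · rw [zero_add, gval_eq_zero ω h, if_pos (by omega)]
      obtain ⟨k', rfl⟩ : ∃ k', k = k'+1 := ⟨k-1, by omega⟩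
      rw [gval_zero_left]
      obtain ⟨j, hj⟩ : ∃ j, k'+1-d = j+1 := ⟨k'-d, by omega⟩
      rw [hj, gval_zero_left]; ring
  | succ m ih =>
    intro k
    rcases Nat.eq_zero_or_pos k with rfl | hk
    · rw [if_neg (by omega : ¬ d ≤ 0), gval_zero_right, gval_zero_right, add_zero]
    obtain ⟨j, rfl⟩ : ∃ j, k = j+1 := ⟨k-1, by omega⟩
    have hmd : m + 1 + d = (m + d) + 1 := by omega
    rw [hmd, gval_succ, ih j, ih (j+1), gval_succ]
    rcases lt_trichotomy (j+1) d with h | rfl | h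
    · rw [if_neg (by omega), if_neg (by omega), if_neg (by omega)]; ring
    · rw [if_neg (by omega), if_pos le_rfl, if_pos le_rfl, Nat.sub_self,
        gval_zero_right, gval_zero_right, hω.pow_eq_one]
      ring
    · rw [if_pos (by omega), if_pos (by omega), if_pos (by omega)]
      obtain ⟨i, hi⟩ : ∃ i, j - d = i ∧ j + 1 - d = i + 1 := ⟨j-d, rfl, by omega⟩
      rw [hi.1, hi.2, gval_succ]
      have hpow : ω ^ (j+1) = ω ^ (i+1) := by
        have : j + 1 = (i+1) + d := by omega
        rw [this, pow_add, hω.pow_eq_one, mul_one]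
      rw [hpow]; ring

lemma gval_lucas (hd : 1 < d) (a r b s : ℕ) (hr : r < d) (hs : s < d) :
    gval ω (a*d + r) (b*d + s) = (Nat.choose a b : ℂ) * gval ω r s := by
  induction a generalizing b with
  | zero =>
    rcases Nat.eq_zero_or_pos b with rfl | hb
    · simp
    · have hbd : d ≤ b*d := Nat.le_mul_of_pos_left d hb
      rw [gval_eq_zero ω (by omega : 0*d + r < b*d + s),
        Nat.choose_eq_zero_of_lt hb]
      simp
  | succ a ih =>
    have h1 : (a+1)*d + r = (a*d + r) + d := by ring
    rw [h1, gval_step hω hd]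
    rcases Nat.eq_zero_or_pos b with rfl | hb
    · rw [if_neg (by omega), ih 0]
      simp
    · obtain ⟨c, rfl⟩ : ∃ c, b = c+1 := ⟨b-1, by omega⟩
      have hbd : d ≤ (c+1)*d := Nat.le_mul_of_pos_left d (by omega)
      rw [if_pos (by omega), show (c+1)*d + s - d = c*d + s from by
        have : (c+1)*d = c*d + d := by ring
        omega, ih (c+1), ih c, Nat.choose_succ_succ]
      push_cast
      ring

end

/-- For `d ≥ 3` dividing both `n` and `k`, with `n-1 ≤ k ≤ 2n-3`, the evaluation of
`c(n,k;q) = (1/[n-1]_q)·[3n-3, n+k]_q·[k-1, n-2]_q` at a primitive `d`-th root of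
unity `ω` equals `C(3n'-1, n'+k')·C(k'-1, n'-1)` with `n' = n/d`, `k' = k/d`. -/
theorem stmt2 (n k d : ℕ) (hd : 3 ≤ d) (hdn : d ∣ n) (hdk : d ∣ k)
    (hnk : (n : ℤ) - 1 ≤ (k : ℤ)) (hk : (k : ℤ) ≤ 2 * (n : ℤ) - 3)
    (ω : ℂ) (hω : IsPrimitiveRoot ω d) :
    Polynomial.aeval ω (gauss (3 * n - 3) (n + k)) *
        Polynomial.aeval ω (gauss (k - 1) (n - 2)) /
        (∑ i ∈ Finset.range (n - 1), ω ^ i) =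
      (Nat.choose (3 * (n / d) - 1) (n / d + k / d) *
        Nat.choose (k / d - 1) (n / d - 1) : ℕ) := by
  have hd1 : 1 < d := by omega
  have hdpos : 0 < d := by omega
  obtain ⟨n', rfl⟩ := hdn
  obtain ⟨k', rfl⟩ := hdk
  -- basic inequalities
  have hn'1 : 1 ≤ n' := by
    by_contra h
    have : n' = 0 := by omega
    subst this
    simp at hk
    have : (0:ℤ) ≤ (d:ℤ) * (k':ℤ) := by positivity
    push_cast at hk
    omega
  have hk'n' : n' ≤ k' := by
    by_contra h
    push_neg at h
    have h1 : (k':ℤ) + 1 ≤ (n':ℤ) := by exact_mod_cast h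
    have h2 : (d:ℤ) * (k'+1) ≤ (d:ℤ) * n' := by
      apply mul_le_mul_of_nonneg_left h1 (by positivity)
    push_cast at hnk
    have hd3 : (3:ℤ) ≤ d := by exact_mod_cast hd
    nlinarith
  have hk'1 : 1 ≤ k' := le_trans hn'1 hk'n'
  -- index decompositions
  have e1 : 3 * (d * n') - 3 = (3*n' - 1) * d + (d - 3) := by
    have h : (3*n' - 1) * d + d = 3 * (d * n') := by
      have h2 : 3*n' - 1 + 1 = 3*n' := by omega
      calc (3*n'-1)*d + d = (3*n'-1+1)*d := by ring
      _ = 3*n' * d := by rw [h2]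
      _ = 3*(d*n') := by ring
    omega
  have e2 : d * n' + d * k' = (n' + k') * d + 0 := by ring
  have e3 : d * k' - 1 = (k' - 1) * d + (d - 1) := by
    have h : (k'-1)*d + d = d * k' := by
      have h2 : k' - 1 + 1 = k' := by omega
      calc (k'-1)*d + d = (k'-1+1)*d := by ring
      _ = k' * d := by rw [h2]
      _ = d * k' := by ring
    omega
  have e4 : d * n' - 2 = (n' - 1) * d + (d - 2) := by
    have h : (n'-1)*d + d = d * n' := by
      have h2 : n' - 1 + 1 = n' := by omega
      calc (n'-1)*d + d = (n'-1+1)*d := by ring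
      _ = n' * d := by rw [h2]
      _ = d * n' := by ring
    omega
  have e5 : d * n' - 1 = (n' - 1) * d + (d - 1) := by
    have h : (n'-1)*d + d = d * n' := by
      have h2 : n' - 1 + 1 = n' := by omega
      calc (n'-1)*d + d = (n'-1+1)*d := by ring
      _ = n' * d := by rw [h2]
      _ = d * n' := by ring
    omega
  have ediv1 : d * n' / d = n' := Nat.mul_div_cancel_left n' hdpos
  have ediv2 : d * k' / d = k' := Nat.mul_div_cancel_left k' hdpos
  rw [ediv1, ediv2]
  -- the common sum S
  set S : ℂ := ∑ i ∈ Finset.range (d-1), ω ^ i with hS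
  have hSne : S ≠ 0 := by
    have h0 : ∑ i ∈ Finset.range d, ω ^ i = 0 := hω.geom_sum_eq_zero hd1
    have hd' : d = (d-1) + 1 := by omega
    rw [hd', Finset.sum_range_succ] at h0
    have : S = -ω^(d-1) := by linear_combination h0
    rw [this]
    simp only [neg_ne_zero]
    exact pow_ne_zero _ (hω.ne_zero (by omega))
  -- evaluate the three gauss values
  have v1 : Polynomial.aeval ω (gauss (3 * (d * n') - 3) (d * n' + d * k')) =
      (Nat.choose (3*n' - 1) (n' + k') : ℂ) := by
    show gval ω _ _ = _
    rw [e1, e2, gval_lucas hω hd1 _ _ _ _ (by omega) (by omega), gval_zero_right, mul_one]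
  have v2 : Polynomial.aeval ω (gauss (d * k' - 1) (d * n' - 2)) =
      (Nat.choose (k' - 1) (n' - 1) : ℂ) * S := by
    show gval ω _ _ = _
    have hpred : gval ω (d-1) (d-2) = S := by
      obtain ⟨e, he⟩ : ∃ e, d = e + 2 := ⟨d-2, by omega⟩
      subst he
      simpa [hS] using gval_pred ω e
    rw [e3, e4, gval_lucas hω hd1 _ _ _ _ (by omega) (by omega), hpred]
  have v3 : (∑ i ∈ Finset.range (d * n' - 1), ω ^ i) = S := by
    rw [← gval_one ω, e5, show (1:ℕ) = 0*d + 1 from by omega,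
      gval_lucas hω hd1 _ _ _ _ (by omega) (by omega), gval_one, Nat.choose_zero_right]
    simp [hS]
  rw [v1, v2, v3, ← mul_assoc, mul_div_assoc, div_self hSne, mul_one]
  push_cast
  ring
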